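/- For integers n, m with 0 < n < m, let [n]_m = sin(nπ/m)/sin(π/m). Then Q([n]_m) = Q if n = 1 or n = m − 1; Q([n]_m) = Q(cos(π/m)) if n is even and 1 < n < m − 1; and Q([n]_m) = Q(cos(2π/m)) otherwise. -/

import Mathlib

open IntermediateField Real
open Set


private lemma hderiv_sin_mul (a x : ℝ) : HasDerivAt (fun y => Real.sin (a*y)) (Real.cos (a*x) * a) x := by
  simpa [Function.comp_def] using (Real.hasDerivAt_sin (a*x)).comp x ((hasDerivAt_id x).const_mul a)

private lemma h_pos {a : ℝ} (ha : 2 ≤ a) {x : ℝ} (hx : x ∈ Set.Ioo 0 (π/a)) :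
    0 < Real.sin (a*x) * Real.cos x - a * Real.cos (a*x) * Real.sin x := by
  have ha0 : (0:ℝ) < a := by linarith
  have hπ : (0:ℝ) < π := Real.pi_pos
  have hpa : π / a ≤ π / 2 := by
    apply div_le_div_of_nonneg_left hπ.le (by norm_num) ha |>.trans_eq rfl
  set h : ℝ → ℝ := fun y => Real.sin (a*y) * Real.cos y - a * Real.cos (a*y) * Real.sin y with hh
  have hder : ∀ y : ℝ, HasDerivAt h ((a^2 - 1) * (Real.sin (a*y) * Real.sin y)) y := by
    intro y
    have h1 : HasDerivAt (fun z => Real.sin (a*z) * Real.cos z)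
        (Real.cos (a*y) * a * Real.cos y + Real.sin (a*y) * (-Real.sin y)) y :=
      (hderiv_sin_mul a y).mul (Real.hasDerivAt_cos y)
    have h2 : HasDerivAt (fun z => Real.cos (a*z)) (-Real.sin (a*y) * a) y := by
      simpa [Function.comp_def] using (Real.hasDerivAt_cos (a*y)).comp y ((hasDerivAt_id y).const_mul a)
    have h3 : HasDerivAt (fun z => a * Real.cos (a*z) * Real.sin z)
        (a * (-Real.sin (a*y) * a) * Real.sin y + a * Real.cos (a*y) * Real.cos y) y := by
      exact ((h2.const_mul a).mul (Real.hasDerivAt_sin y))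
    have := h1.sub h3
    exact this.congr_deriv (by ring)
  have hmono : StrictMonoOn h (Set.Icc 0 (π/a)) := by
    apply strictMonoOn_of_deriv_pos (convex_Icc _ _)
    · exact (Continuous.continuousOn (by fun_prop))
    · intro y hy
      rw [interior_Icc] at hy
      rw [(hder y).deriv]
      have hy1 : 0 < y := hy.1
      have hy2 : y < π / a := hy.2
      have hay : a * y < π := by
        rw [← lt_div_iff₀' ha0]; exact hy2
      have hsy : 0 < Real.sin y := Real.sin_pos_of_pos_of_lt_pi hy1 (by nlinarith)
      have hsay : 0 < Real.sin (a*y) := Real.sin_pos_of_pos_of_lt_pi (by positivity) hay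
      have : (0:ℝ) < a^2 - 1 := by nlinarith
      positivity
  have h0 : h 0 = 0 := by simp [hh]
  have := hmono (Set.mem_Icc.mpr ⟨le_refl 0, by positivity⟩) (Set.mem_Icc.mpr ⟨hx.1.le, hx.2.le⟩) hx.1
  rw [h0] at this
  exact this

lemma lemA {a : ℝ} (ha : 2 ≤ a) :
    StrictAntiOn (fun x => Real.sin (a*x) / Real.sin x) (Set.Ioc 0 (π/a)) := by
  have ha0 : (0:ℝ) < a := by linarith
  have hπ : (0:ℝ) < π := Real.pi_pos
  have hpa : π / a ≤ π / 2 := div_le_div_of_nonneg_left hπ.le (by norm_num) ha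
  have hsin_pos : ∀ x ∈ Set.Ioc (0:ℝ) (π/a), 0 < Real.sin x := by
    intro x hx
    exact Real.sin_pos_of_pos_of_lt_pi hx.1 (lt_of_le_of_lt (hx.2.trans hpa) (by linarith))
  apply strictAntiOn_of_deriv_neg (convex_Ioc _ _)
  · apply ContinuousOn.div
    · fun_prop
    · fun_prop
    · intro x hx; exact (hsin_pos x hx).ne'
  · intro x hx
    rw [interior_Ioc] at hx
    have hsx : 0 < Real.sin x := hsin_pos x ⟨hx.1, hx.2.le⟩
    have hd : HasDerivAt (fun x => Real.sin (a*x) / Real.sin x)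
        ((Real.cos (a*x) * a * Real.sin x - Real.sin (a*x) * Real.cos x) / (Real.sin x)^2) x :=
      (hderiv_sin_mul a x).div (Real.hasDerivAt_sin x) hsx.ne'
    rw [hd.deriv]
    apply div_neg_of_neg_of_pos
    · have := h_pos ha hx
      nlinarith
    · positivity


private lemma cos_nat_pi (j : ℕ) : Real.cos (j*π) = (-1)^j := by
  induction j with
  | zero => simp
  | succ k ih => push_cast; rw [add_mul, one_mul, Real.cos_add_pi, ih]; ring

private lemma abs_sin_nat_pi_sub (j : ℕ) (y : ℝ) : |Real.sin (j*π - y)| = |Real.sin y| := by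
  rw [Real.sin_sub, Real.sin_nat_mul_pi, cos_nat_pi]
  rw [zero_mul, zero_sub, abs_neg, abs_mul, abs_pow, abs_neg, abs_one, one_pow, one_mul]

-- core inequality for 2 ≤ a, b and 2a ≤ m, 2b ≤ m
set_option maxHeartbeats 1000000 in
private lemma key_core {m a b : ℕ} (ha : 2 ≤ a) (hb : 2 ≤ b) (ha' : 2*a ≤ m) (hb' : 2*b ≤ m) :
    |Real.sin ((a*b : ℕ) * (π/m))| * Real.sin (π/m) <
      Real.sin (a*(π/m)) * Real.sin (b*(π/m)) := by
  have hm : 0 < m := by omega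
  have hπ : (0:ℝ) < π := Real.pi_pos
  set θ := π/m with hθdef
  have hθ : 0 < θ := by positivity
  have hmθ : (m:ℝ) * θ = π := by
    rw [hθdef]; field_simp
  clear_value θ
  have haθ : (a:ℝ) * θ ≤ π/2 := by
    have : ((2*a : ℕ):ℝ) * θ ≤ (m:ℝ)*θ := by
      apply mul_le_mul_of_nonneg_right _ hθ.le
      exact_mod_cast ha'
    push_cast at this
    nlinarith
  have hbθ : (b:ℝ) * θ ≤ π/2 := by
    have : ((2*b : ℕ):ℝ) * θ ≤ (m:ℝ)*θ := by
      apply mul_le_mul_of_nonneg_right _ hθ.le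
      exact_mod_cast hb'
    push_cast at this
    nlinarith
  have ha2 : (2:ℝ) ≤ (a:ℝ) := by exact_mod_cast ha
  have hb2 : (2:ℝ) ≤ (b:ℝ) := by exact_mod_cast hb
  have hsa : 0 < Real.sin (a*θ) := Real.sin_pos_of_pos_of_lt_pi (by positivity) (by nlinarith)
  have hsb : 0 < Real.sin (b*θ) := Real.sin_pos_of_pos_of_lt_pi (by positivity) (by nlinarith)
  have hsθ : 0 < Real.sin θ := Real.sin_pos_of_pos_of_lt_pi hθ (by nlinarith)
  push_cast
  rcases lt_or_ge ((a:ℝ)*(b:ℝ)*θ) π with hcase | hcase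
  · -- small case: monotonicity
    have h1 : (b:ℝ)*θ ≤ π / a := by
      rw [le_div_iff₀ (by linarith : (0:ℝ) < (a:ℝ))]
      nlinarith
    have hmem1 : θ ∈ Set.Ioc 0 (π/(a:ℝ)) := ⟨hθ, by nlinarith⟩
    have hmem2 : (b:ℝ)*θ ∈ Set.Ioc 0 (π/(a:ℝ)) := ⟨by positivity, h1⟩
    have hlt : θ < (b:ℝ)*θ := by nlinarith
    have := lemA ha2 hmem1 hmem2 hlt
    simp only at this
    have habs : |Real.sin ((a:ℝ)*(b:ℝ)*θ)| = Real.sin ((a:ℝ)*((b:ℝ)*θ)) := by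
      rw [abs_of_nonneg]
      · ring_nf
      · exact Real.sin_nonneg_of_nonneg_of_le_pi (by positivity) (by nlinarith)
    rw [habs]
    rw [div_lt_div_iff₀ hsb hsθ] at this
    nlinarith
  · -- large case: Jordan inequality
    have j1 : 2/π * ((a:ℝ)*θ) ≤ Real.sin ((a:ℝ)*θ) := Real.mul_le_sin (by positivity) haθ
    have j2 : 2/π * ((b:ℝ)*θ) ≤ Real.sin ((b:ℝ)*θ) := Real.mul_le_sin (by positivity) hbθ
    have habs : |Real.sin ((a:ℝ)*(b:ℝ)*θ)| ≤ 1 := Real.abs_sin_le_one _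
    have hsinθ : Real.sin θ < θ := Real.sin_lt hθ
    have hπ4 : π < 4 := by linarith [Real.pi_lt_d2]
    have key : 4*θ/π ≤ Real.sin ((a:ℝ)*θ) * Real.sin ((b:ℝ)*θ) := by
      have h4 : (2/π * ((a:ℝ)*θ)) * (2/π * ((b:ℝ)*θ)) ≤ Real.sin ((a:ℝ)*θ) * Real.sin ((b:ℝ)*θ) :=
        mul_le_mul j1 j2 (by positivity) hsa.le
      have h6 : π*θ ≤ ((a:ℝ)*(b:ℝ)*θ)*θ := mul_le_mul_of_nonneg_right hcase hθ.le
      have h8 : 4/π^2 * (π*θ) ≤ (2/π * ((a:ℝ)*θ)) * (2/π * ((b:ℝ)*θ)) := by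
        have := mul_le_mul_of_nonneg_left h6 (by positivity : (0:ℝ) ≤ 4/π^2)
        calc 4/π^2 * (π*θ) ≤ 4/π^2 * (((a:ℝ)*(b:ℝ)*θ)*θ) := this
          _ = (2/π * ((a:ℝ)*θ)) * (2/π * ((b:ℝ)*θ)) := by ring
      have h7 : 4/π^2 * (π*θ) = 4*θ/π := by
        field_simp
      rw [h7] at h8
      linarith
    have hfin : |Real.sin ((a:ℝ)*(b:ℝ)*θ)| * Real.sin θ ≤ 1 * Real.sin θ :=
      mul_le_mul_of_nonneg_right habs hsθ.le
    rw [one_mul] at hfin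
    have hθ4 : θ < 4*θ/π := by
      rw [lt_div_iff₀ hπ]
      calc θ * π < θ * 4 := by exact mul_lt_mul_of_pos_left hπ4 hθ
        _ = 4*θ := by ring
    linarith


section TEST
variable {m : ℕ}

private lemma red {m a : ℕ} (hm : 0 < m) (ha : 2 ≤ a) (ha' : a ≤ m - 2) :
    ∃ a' : ℕ, 2 ≤ a' ∧ 2*a' ≤ m ∧ Real.sin ((a':ℝ)*(π/m)) = Real.sin ((a:ℝ)*(π/m)) ∧
      ∀ b : ℕ, |Real.sin ((a':ℝ)*(b:ℝ)*(π/m))| = |Real.sin ((a:ℝ)*(b:ℝ)*(π/m))| := by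
  rcases le_or_gt (2*a) m with h | h
  · exact ⟨a, ha, h, rfl, fun _ => rfl⟩
  · refine ⟨m - a, by omega, by omega, ?_, ?_⟩
    · have hcast : ((m - a : ℕ) : ℝ) = (m:ℝ) - (a:ℝ) := by
        push_cast [Nat.sub_le m 2 |> fun _ => (by omega : a ≤ m)]; ring
      rw [hcast]
      have : ((m:ℝ) - a) * (π/m) = π - (a:ℝ)*(π/m) := by
        field_simp
      rw [this, Real.sin_pi_sub]
    · intro b
      have hcast : ((m - a : ℕ) : ℝ) = (m:ℝ) - (a:ℝ) := by
        push_cast [(by omega : a ≤ m)]; ring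
      rw [hcast]
      have : ((m:ℝ) - a) * (b:ℝ) * (π/m) = (b:ℕ)*π - (a:ℝ)*(b:ℝ)*(π/m) := by
        field_simp
      rw [this]
      exact abs_sin_nat_pi_sub b _
private lemma key_ineq {m a b : ℕ} (hm : 0 < m) (ha : 2 ≤ a) (ha' : a ≤ m - 2)
    (hb : 2 ≤ b) (hb' : b ≤ m - 2) :
    |Real.sin ((a:ℝ)*(b:ℝ)*(π/m))| * Real.sin (π/m) <
      Real.sin ((a:ℝ)*(π/m)) * Real.sin ((b:ℝ)*(π/m)) := by
  obtain ⟨a', ha1, ha2, ha3, ha4⟩ := red hm ha ha'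
  obtain ⟨b', hb1, hb2, hb3, hb4⟩ := red hm hb hb'
  have e1 : |Real.sin ((a':ℝ)*(b':ℝ)*(π/m))| = |Real.sin ((a:ℝ)*(b:ℝ)*(π/m))| := by
    rw [ha4 b']
    have c1 : (a:ℝ)*(b':ℝ)*(π/m) = (b':ℝ)*(a:ℝ)*(π/m) := by ring
    have c2 : (b:ℝ)*(a:ℝ)*(π/m) = (a:ℝ)*(b:ℝ)*(π/m) := by ring
    rw [c1, hb4 a, c2]
  have := key_core ha1 hb1 ha2 hb2
  push_cast at this
  rw [e1, ha3, hb3] at this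
  exact this

private lemma sin_nat_pi_sub (n : ℕ) (y : ℝ) :
    Real.sin (n*π - y) = -((-1)^n * Real.sin y) := by
  rw [Real.sin_sub, Real.sin_nat_mul_pi, cos_nat_pi]; ring

private lemma sin_nat_two_pi_sub (n : ℕ) (y : ℝ) :
    Real.sin ((n:ℝ)*(2*π) - y) = -Real.sin y := by
  have h1 : Real.sin ((n:ℝ)*(2*π)) = 0 := by
    have : (n:ℝ)*(2*π) = ((2*n : ℕ):ℝ)*π := by push_cast; ring
    rw [this, Real.sin_nat_mul_pi]
  have h2 : Real.cos ((n:ℝ)*(2*π)) = 1 := Real.cos_nat_mul_two_pi n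
  rw [Real.sin_sub, h1, h2]; ring

private lemma small_k {m n j : ℕ} (hn1 : 1 < n) (hn2 : n < m - 1) (hj1 : 1 ≤ j) (hj2 : j ≤ m - 1)
    (heq : Real.sin ((j:ℝ)*(n:ℝ)*(π/m)) * Real.sin (π/m)
      = Real.sin ((n:ℝ)*(π/m)) * Real.sin ((j:ℝ)*(π/m))) :
    j = 1 ∨ (n % 2 = 1 ∧ j = m - 1) := by
  have hm : 4 ≤ m := by omega
  have hm0 : (0:ℝ) < (m:ℝ) := by positivity
  have hmθ : (m:ℝ) * (π/m) = π := by field_simp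
  have hθ : (0:ℝ) < π/m := by positivity
  have hm4 : (4:ℝ) ≤ (m:ℝ) := by exact_mod_cast hm
  have hsθ : 0 < Real.sin (π/m) := Real.sin_pos_of_pos_of_lt_pi hθ (by
    rw [div_lt_iff₀ hm0]; nlinarith [Real.pi_pos])
  have hnm : (n:ℝ) < (m:ℝ) := by exact_mod_cast (by omega : n < m)
  have hsn : 0 < Real.sin ((n:ℝ)*(π/m)) := by
    apply Real.sin_pos_of_pos_of_lt_pi (by positivity)
    calc (n:ℝ)*(π/m) < (m:ℝ)*(π/m) := by
          apply mul_lt_mul_of_pos_right hnm hθ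
      _ = π := hmθ
  by_cases hj1' : j = 1
  · exact Or.inl hj1'
  by_cases hjm : j = m - 1
  · subst hjm
    have hcast : ((m - 1 : ℕ) : ℝ) = (m:ℝ) - 1 := by push_cast [(by omega : 1 ≤ m)]; ring
    rw [hcast] at heq
    have e1 : ((m:ℝ) - 1)*(n:ℝ)*(π/m) = (n:ℕ)*π - (n:ℝ)*(π/m) := by
      field_simp
    have e2 : ((m:ℝ) - 1)*(π/m) = π - π/m := by field_simp
    rw [e1, e2, sin_nat_pi_sub, Real.sin_pi_sub] at heq
    rcases Nat.even_or_odd n with he | ho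
    · exfalso
      rw [he.neg_one_pow] at heq
      nlinarith
    · exact Or.inr ⟨Nat.odd_iff.mp ho, rfl⟩
  · exfalso
    have := key_ineq (by omega : 0 < m) (by omega : 2 ≤ j) (by omega : j ≤ m - 2)
      (by omega : 2 ≤ n) (by omega : n ≤ m - 2)
    have hle : Real.sin ((j:ℝ)*(n:ℝ)*(π/m)) * Real.sin (π/m)
        ≤ |Real.sin ((j:ℝ)*(n:ℝ)*(π/m))| * Real.sin (π/m) :=
      mul_le_mul_of_nonneg_right (le_abs_self _) hsθ.le
    nlinarith

private lemma classify {m n k : ℕ} (hn1 : 1 < n) (hn2 : n < m - 1) (hk1 : 0 < k) (hk2 : k < 2*m)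
    (hks : Real.sin ((k:ℝ)*(π/m)) ≠ 0)
    (heq : Real.sin ((k:ℝ)*(n:ℝ)*(π/m)) * Real.sin (π/m)
      = Real.sin ((n:ℝ)*(π/m)) * Real.sin ((k:ℝ)*(π/m))) :
    (k = 1 ∨ k = 2*m-1) ∨ (n % 2 = 1 ∧ (k = m-1 ∨ k = m+1)) := by
  have hm : 4 ≤ m := by omega
  have hm0 : (0:ℝ) < (m:ℝ) := by positivity
  have hmθ : (m:ℝ) * (π/m) = π := by field_simp
  have hkm : k ≠ m := by
    intro h
    apply hks
    rw [h, hmθ, Real.sin_pi]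
  rcases lt_or_gt_of_ne (show k ≠ m from hkm) with hlt | hgt
  · rcases small_k hn1 hn2 (by omega) (by omega) heq with h | ⟨ho, h⟩
    · exact Or.inl (Or.inl h)
    · exact Or.inr ⟨ho, Or.inl h⟩
  · -- k > m : set j = 2m - k
    set j := 2*m - k with hjdef
    have hj1 : 1 ≤ j := by omega
    have hj2 : j ≤ m - 1 := by omega
    have hcast : (k:ℝ) = 2*(m:ℝ) - (j:ℝ) := by
      rw [hjdef]; push_cast [(by omega : k ≤ 2*m)]; ring
    have e1 : (k:ℝ)*(π/m) = (1:ℕ)*(2*π) - (j:ℝ)*(π/m) := by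
      rw [hcast]; push_cast; field_simp
    have e2 : (k:ℝ)*(n:ℝ)*(π/m) = (n:ℕ)*(2*π) - (j:ℝ)*(n:ℝ)*(π/m) := by
      rw [hcast]; push_cast; field_simp
    rw [e1, e2, sin_nat_two_pi_sub, sin_nat_two_pi_sub] at heq
    rw [e1, sin_nat_two_pi_sub] at hks
    have hks' : Real.sin ((j:ℝ)*(π/m)) ≠ 0 := fun h => hks (by rw [h, neg_zero])
    have heq' : Real.sin ((j:ℝ)*(n:ℝ)*(π/m)) * Real.sin (π/m)
        = Real.sin ((n:ℝ)*(π/m)) * Real.sin ((j:ℝ)*(π/m)) := by linarith [heq]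
    rcases small_k hn1 hn2 hj1 hj2 heq' with h | ⟨ho, h⟩
    · exact Or.inl (Or.inr (by omega))
    · exact Or.inr ⟨ho, Or.inr (by omega)⟩

open IntermediateField in
private noncomputable def RtoC : ℝ →ₐ[ℚ] ℂ := Complex.ofRealHom.toRatAlgHom

@[simp] private lemma RtoC_apply (x : ℝ) : RtoC x = (x : ℂ) := rfl

open IntermediateField in
private lemma adjoin_real_eq {x y : ℝ}
    (h : adjoin ℚ {(x:ℂ)} = adjoin ℚ {(y:ℂ)}) : ℚ⟮x⟯ = ℚ⟮y⟯ := by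
  apply IntermediateField.map_injective RtoC
  rw [IntermediateField.adjoin_map, IntermediateField.adjoin_map]
  simpa using h

open IntermediateField in
private lemma fix_adjoin {F E : Type*} [Field F] [Field E] [Algebra F E] (σ : E ≃ₐ[F] E)
    (c : E) (h : σ c = c) : σ ∈ (adjoin F {c}).fixingSubgroup := by
  rw [IntermediateField.mem_fixingSubgroup_iff]
  intro x hx
  induction hx using IntermediateField.adjoin_induction with
  | mem y hy => rw [Set.mem_singleton_iff] at hy; rw [hy]; exact h
  | algebraMap y => exact σ.commutes y
  | add a b _ _ ha hb => rw [map_add, ha, hb]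
  | inv a _ ha => rw [map_inv₀, ha]
  | mul a b _ _ ha hb => rw [map_mul, ha, hb]

open IntermediateField in
private lemma engine {m n t : ℕ} (hn1 : 1 < n) (hn2 : n < m - 1) (ht : 0 < t)
    (cr : ℝ)
    (hcr : (cr : ℂ) = (Complex.exp (2*(π:ℝ)*Complex.I/((2*m : ℕ):ℂ))^t
      + (Complex.exp (2*(π:ℝ)*Complex.I/((2*m : ℕ):ℂ))^t)⁻¹)/2)
    (hmemR : (Real.sin ((n:ℝ) * π / m) / Real.sin (π/m)) ∈ adjoin ℚ {cr})
    (hfix : ∀ k : ℕ, ((k = 1 ∨ k = 2*m-1) ∨ (n % 2 = 1 ∧ (k = m-1 ∨ k = m+1))) →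
      (k*t) % (2*m) = t % (2*m) ∨ (k*t + t) % (2*m) = 0) :
    ℚ⟮Real.sin ((n:ℝ) * π / m) / Real.sin (π/m)⟯ = ℚ⟮cr⟯ := by
  have hm : 4 ≤ m := by omega
  set N : ℕ := 2*m with hNdef
  haveI : NeZero N := ⟨by omega⟩
  have hN0 : N ≠ 0 := by omega
  have hm0 : (0:ℝ) < (m:ℝ) := by positivity
  have hmC : ((m:ℕ):ℂ) ≠ 0 := by exact_mod_cast hm0.ne'
  have hmθ : (m:ℝ) * (π/m) = π := by field_simp
  have hm4 : (4:ℝ) ≤ (m:ℝ) := by exact_mod_cast hm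
  have hθpos : (0:ℝ) < π/m := by positivity
  have hθlt : π/m < π := by
    rw [div_lt_iff₀ hm0]; nlinarith [Real.pi_pos]
  have hsθ : 0 < Real.sin (π/m) := Real.sin_pos_of_pos_of_lt_pi hθpos hθlt
  have hsn : 0 < Real.sin ((n:ℝ)*(π/m)) := by
    apply Real.sin_pos_of_pos_of_lt_pi (by positivity)
    have hnm : (n:ℝ) < (m:ℝ) := by exact_mod_cast (by omega : n < m)
    calc (n:ℝ)*(π/m) < (m:ℝ)*(π/m) := mul_lt_mul_of_pos_right hnm hθpos
      _ = π := hmθ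
  -- the primitive root
  set ζ : ℂ := Complex.exp (2*(π:ℝ)*Complex.I/(N:ℂ)) with hζdef
  have hζ : IsPrimitiveRoot ζ N := Complex.isPrimitiveRoot_exp N hN0
  set Np : ℕ+ := ⟨N, by omega⟩ with hNp
  have hζp : IsPrimitiveRoot ζ (Np : ℕ) := hζ
  set L : IntermediateField ℚ ℂ := ℚ⟮ζ⟯ with hLdef
  haveI hcyc : IsCyclotomicExtension {(Np:ℕ)} ℚ L := by
    have H := IntermediateField.adjoin_simple_toSubalgebra_of_isAlgebraic
      ((hζ.isIntegral (by omega)).tower_top (A := ℚ)).isAlgebraic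
    have h0 : IsCyclotomicExtension {(Np:ℕ)} ℚ (Algebra.adjoin ℚ ({ζ} : Set ℂ)) :=
      hζp.adjoin_isCyclotomicExtension ℚ
    exact IsCyclotomicExtension.equiv {(Np:ℕ)} ℚ _ (h := h0) (Subalgebra.equivOfEq _ _ H.symm)
  haveI := IsCyclotomicExtension.finiteDimensional {(Np:ℕ)} ℚ L
  haveI := IsCyclotomicExtension.isGalois {(Np:ℕ)} ℚ L
  set ζ' : L := IntermediateField.AdjoinSimple.gen ℚ ζ with hζ'def
  have hζ'L : IsPrimitiveRoot ζ' N := by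
    exact (IsPrimitiveRoot.coe_submonoidClass_iff (ζ := ζ')).mp hζ
  -- powers of ζ
  have zeta_pow_eq : ∀ j : ℕ, ζ^j = Complex.exp ((((j:ℝ)*(π/m) : ℝ) : ℂ) * Complex.I) := by
    intro j
    rw [hζdef, ← Complex.exp_nat_mul]
    congr 1
    have : ((N:ℕ):ℂ) = 2*(m:ℂ) := by push_cast [hNdef]; ring
    rw [this]
    push_cast
    field_simp
  -- the elements
  set s : ℕ → L := fun j => ζ'^j - (ζ'^j)⁻¹ with hsdef
  have val_s : ∀ j : ℕ, (L.val (s j) : ℂ) = 2 * ((Real.sin ((j:ℝ)*(π/m)) : ℝ) : ℂ) * Complex.I := by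
    intro j
    have hv : L.val (s j) = ζ^j - (ζ^j)⁻¹ := by
      simp [hsdef, map_sub, map_inv₀, map_pow, hζ'def]
    rw [hv, zeta_pow_eq j, ← Complex.exp_neg]
    have : -((((j:ℝ)*(π/m) : ℝ) : ℂ) * Complex.I) = (((-((j:ℝ)*(π/m)) : ℝ)) : ℂ) * Complex.I := by
      push_cast; ring
    rw [this, Complex.exp_mul_I, Complex.exp_mul_I]
    rw [← Complex.ofReal_sin, ← Complex.ofReal_cos, ← Complex.ofReal_sin, ← Complex.ofReal_cos]
    push_cast [Real.sin_neg, Real.cos_neg]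
    ring
  have val_s1 : (L.val (s 1) : ℂ) = 2 * ((Real.sin (π/m) : ℝ) : ℂ) * Complex.I := by
    rw [val_s 1]; norm_num
  have hs1 : s 1 ≠ 0 := by
    intro h
    have h1 := val_s1
    rw [h, map_zero] at h1
    have h2 : (2:ℂ) * ((Real.sin (π/m) : ℝ) : ℂ) * Complex.I ≠ 0 := by
      apply mul_ne_zero (mul_ne_zero two_ne_zero _) Complex.I_ne_zero
      rw [Complex.ofReal_ne_zero]
      exact hsθ.ne'
    exact h2 h1.symm
  set x' : L := s n / s 1 with hx'def
  set c' : L := (ζ'^t + (ζ'^t)⁻¹)/2 with hc'def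
  have val_x' : (L.val x' : ℂ) = ((Real.sin ((n:ℝ) * π / m) / Real.sin (π/m) : ℝ) : ℂ) := by
    rw [hx'def, map_div₀, val_s, val_s1]
    rw [Complex.ofReal_div]
    rw [div_eq_div_iff]
    · push_cast
      rw [mul_div_assoc]
      ring
    · exact mul_ne_zero (mul_ne_zero two_ne_zero (by rw [Complex.ofReal_ne_zero]; exact hsθ.ne')) Complex.I_ne_zero
    · rw [Complex.ofReal_ne_zero]; exact hsθ.ne'
  have val_c' : (L.val c' : ℂ) = (cr : ℂ) := by
    have h2 : (L.val (2:L) : ℂ) = 2 := map_ofNat _ 2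
    have hvζ : (L.val ζ' : ℂ) = ζ := rfl
    rw [hc'def, map_div₀, map_add, map_inv₀, map_pow, h2, hvζ, hcr]
  -- main equality at the level of L
  have main : adjoin ℚ {x'} = adjoin ℚ {c'} := by
    apply le_antisymm
    · -- easy inclusion
      rw [IntermediateField.adjoin_simple_le_iff]
      have h1 : (RtoC (Real.sin ((n:ℝ) * π / m) / Real.sin (π/m))) ∈
          (adjoin ℚ {cr}).map RtoC := ⟨_, hmemR, rfl⟩
      rw [IntermediateField.adjoin_map] at h1
      simp only [Set.image_singleton, RtoC_apply] at h1
      have h2 : (L.val x') ∈ (adjoin ℚ {c'}).map L.val := by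
        erw [IntermediateField.adjoin_map]
        simp only [Set.image_singleton]
        rw [val_x', val_c'] at *
        exact h1
      obtain ⟨w, hw, hwe⟩ := h2
      have : w = x' := Subtype.val_injective hwe
      rwa [← this]
    · -- hard inclusion via Galois
      rw [← IsGalois.fixedField_fixingSubgroup (adjoin ℚ {x'})]
      rw [IntermediateField.le_iff_le]
      intro σ hσ
      have hσx : σ x' = x' := hσ ⟨x', IntermediateField.mem_adjoin_simple_self ℚ x'⟩
      -- get k
      have hpow : (σ ζ')^N = 1 := by
        rw [← map_pow, hζ'L.pow_eq_one, map_one]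
      obtain ⟨k, hkN, hk⟩ := hζ'L.eq_pow_of_pow_eq_one hpow
      have hσs : ∀ j : ℕ, σ (s j) = s (k*j) := by
        intro j
        rw [hsdef]
        simp only [map_sub, map_inv₀, map_pow]
        rw [← hk, ← pow_mul]
      have hsk : s k ≠ 0 := by
        have : σ (s 1) = s k := by rw [hσs 1, mul_one]
        intro h
        apply hs1
        apply σ.injective
        rw [this, h, map_zero]
      have hk0 : k ≠ 0 := by
        intro h
        apply hsk
        rw [h, hsdef]
        norm_num
      -- cross-multiplied identity in L
      have hcross : s (k*n) * s 1 = s n * s k := by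
        have : σ x' = s (k*n) / s k := by
          rw [hx'def, map_div₀, hσs n, hσs 1, mul_one]
        rw [this, hx'def] at hσx
        field_simp at hσx
        linear_combination hσx
      -- push to ℝ
      have hC := congrArg L.val hcross
      rw [map_mul, map_mul, val_s, val_s1, val_s, val_s] at hC
      have hre : Real.sin ((k:ℝ)*(n:ℝ)*(π/m)) * Real.sin (π/m)
          = Real.sin ((n:ℝ)*(π/m)) * Real.sin ((k:ℝ)*(π/m)) := by
        have h4 : ((Real.sin ((k:ℝ)*(n:ℝ)*(π/m)) * Real.sin (π/m) : ℝ) : ℂ) * (2*Complex.I*(2*Complex.I))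
            = ((Real.sin ((n:ℝ)*(π/m)) * Real.sin ((k:ℝ)*(π/m)) : ℝ):ℂ) * (2*Complex.I*(2*Complex.I)) := by
          push_cast
          push_cast at hC
          linear_combination hC
        have h5 := mul_right_cancel₀ (by
          simp [Complex.I_ne_zero]
          : (2*Complex.I*(2*Complex.I) : ℂ) ≠ 0) h4
        exact_mod_cast h5
      have hsinkne : Real.sin ((k:ℝ)*(π/m)) ≠ 0 := by
        intro h
        apply hsk
        apply Subtype.val_injective
        show (L.val (s k) : ℂ) = ((0:L) : ℂ)
        rw [val_s k, h]
        simp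
      -- classification
      have hclass := classify hn1 hn2 (Nat.pos_of_ne_zero hk0) hkN hsinkne hre
      -- conclude σ fixes c'
      have hfixk := hfix k hclass
      have hζt : (σ ζ')^t = ζ'^t ∨ (σ ζ')^t = (ζ'^t)⁻¹ := by
        rw [← hk, ← pow_mul]
        rcases hfixk with h | h
        · left
          rw [pow_eq_pow_mod (k*t) hζ'L.pow_eq_one, h, ← pow_eq_pow_mod t hζ'L.pow_eq_one]
        · right
          have hmul : ζ'^(k*t) * ζ'^t = 1 := by
            rw [← pow_add, pow_eq_pow_mod (k*t+t) hζ'L.pow_eq_one, h, pow_zero]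
          exact eq_inv_of_mul_eq_one_left hmul
      have hσc : σ c' = c' := by
        have h2 : σ (2 : L) = 2 := map_ofNat σ 2
        rw [hc'def, map_div₀, map_add, map_inv₀, map_pow, h2]
        rcases hζt with h | h
        · rw [h]
        · rw [h, inv_inv, add_comm]
      exact fix_adjoin σ c' hσc
  -- transfer to ℝ
  apply adjoin_real_eq
  have := congrArg (IntermediateField.map L.val) main
  erw [IntermediateField.adjoin_map, IntermediateField.adjoin_map] at this
  simp only [Set.image_singleton] at this
  rw [val_x', val_c'] at this
  exact this

private lemma zeta_pow (m j : ℕ) (hm : 0 < m) :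
    Complex.exp (2*(π:ℝ)*Complex.I/((2*m : ℕ):ℂ))^j
      = Complex.exp ((((j:ℝ)*(π/m) : ℝ):ℂ) * Complex.I) := by
  rw [← Complex.exp_nat_mul]
  congr 1
  have hmC : ((m:ℕ):ℂ) ≠ 0 := by
    simp only [Nat.cast_ne_zero]; omega
  have : ((2*m:ℕ):ℂ) = 2*(m:ℂ) := by push_cast; ring
  rw [this]
  push_cast
  field_simp

private lemma cos_exp (m t : ℕ) (hm : 0 < m) :
    ((Real.cos ((t:ℝ)*(π/m)) : ℝ) : ℂ)
      = (Complex.exp (2*(π:ℝ)*Complex.I/((2*m : ℕ):ℂ))^t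
        + (Complex.exp (2*(π:ℝ)*Complex.I/((2*m : ℕ):ℂ))^t)⁻¹)/2 := by
  rw [zeta_pow m t hm, ← Complex.exp_neg]
  have : -((((t:ℝ)*(π/m) : ℝ) : ℂ) * Complex.I) = (((-((t:ℝ)*(π/m)) : ℝ)) : ℂ) * Complex.I := by
    push_cast; ring
  rw [this, Complex.exp_mul_I, Complex.exp_mul_I]
  rw [← Complex.ofReal_sin, ← Complex.ofReal_cos, ← Complex.ofReal_sin, ← Complex.ofReal_cos]
  push_cast [Real.sin_neg, Real.cos_neg]
  ring

open IntermediateField Polynomial in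
/-- cos of an integer multiple of `x` lies in any intermediate field containing `cos x`. -/
private lemma cos_zsmul_mem {F : IntermediateField ℚ ℝ} {x : ℝ} (hx : Real.cos x ∈ F) (z : ℤ) :
    Real.cos ((z:ℝ) * x) ∈ F := by
  have h1 : Real.cos ((z:ℝ) * x) = (Chebyshev.T ℝ z).eval (Real.cos x) :=
    (Polynomial.Chebyshev.T_real_cos x z).symm
  have h2 : (Chebyshev.T ℝ z) = (Chebyshev.T ℚ z).map (algebraMap ℚ ℝ) :=
    (Polynomial.Chebyshev.map_T (algebraMap ℚ ℝ) z).symm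
  rw [h1, h2, Polynomial.eval_map, ← Polynomial.aeval_def]
  exact Algebra.adjoin_le (Set.singleton_subset_iff.mpr hx)
    (Polynomial.aeval_mem_adjoin_singleton ℚ (Real.cos x))

open IntermediateField in
private lemma cheb_even {m n : ℕ} (hm : 2 ≤ m) (hn : n % 2 = 0) :
    Real.sin ((n:ℝ) * π / m) / Real.sin (π/m) ∈ adjoin ℚ {Real.cos (π/m)} := by
  obtain ⟨r, rfl⟩ : ∃ r, n = 2*r := ⟨n/2, by omega⟩
  have hm0 : (0:ℝ) < (m:ℝ) := by positivity
  have hsθ : Real.sin (π/m) ≠ 0 := by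
    have h2 : (2:ℝ) ≤ (m:ℝ) := by exact_mod_cast hm
    refine (Real.sin_pos_of_pos_of_lt_pi (by positivity) ?_).ne'
    rw [div_lt_iff₀ hm0]; nlinarith [Real.pi_pos]
  set θ := π / (m:ℝ) with hθdef
  have key : Real.sin ((2*r : ℕ) * θ)
      = ∑ i ∈ Finset.range r, 2 * Real.cos ((2*(i:ℝ)+1) * θ) * Real.sin θ := by
    have tele := Finset.sum_range_sub (fun i => Real.sin (2*(i:ℝ)*θ)) r
    have term : ∀ i : ℕ, Real.sin (2*((i:ℝ)+1)*θ) - Real.sin (2*(i:ℝ)*θ)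
        = 2 * Real.cos ((2*(i:ℝ)+1) * θ) * Real.sin θ := by
      intro i
      have e1 : 2*((i:ℝ)+1)*θ = (2*(i:ℝ)+1)*θ + θ := by ring
      have e2 : 2*(i:ℝ)*θ = (2*(i:ℝ)+1)*θ - θ := by ring
      rw [e1, e2, Real.sin_add, Real.sin_sub]
      ring
    calc Real.sin ((2*r : ℕ) * θ) = Real.sin (2*(r:ℝ)*θ) - Real.sin (2*(0:ℝ)*θ) := by
          push_cast; norm_num
      _ = ∑ i ∈ Finset.range r, (Real.sin (2*((i:ℝ)+1)*θ) - Real.sin (2*(i:ℝ)*θ)) := by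
          push_cast at tele; linarith [tele]
      _ = ∑ i ∈ Finset.range r, 2 * Real.cos ((2*(i:ℝ)+1) * θ) * Real.sin θ := by
          exact Finset.sum_congr rfl fun i _ => term i
  have hdiv : Real.sin ((2*r : ℕ) * π / m) / Real.sin θ
      = ∑ i ∈ Finset.range r, 2 * Real.cos ((2*(i:ℝ)+1) * θ) := by
    rw [div_eq_iff hsθ]
    rw [mul_div_assoc, ← hθdef, key, Finset.sum_mul]
  rw [hdiv]
  apply sum_mem
  intro i _
  have h2mem : (2:ℝ) ∈ adjoin ℚ {Real.cos θ} := by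
    have := _root_.natCast_mem (adjoin ℚ {Real.cos θ}) 2
    simpa using this
  apply mul_mem h2mem
  have hz := cos_zsmul_mem (F := adjoin ℚ {Real.cos θ})
    (mem_adjoin_simple_self ℚ (Real.cos θ)) (2*(i:ℤ)+1)
  have e : ((2*(i:ℤ)+1 : ℤ) : ℝ) = 2*(i:ℝ)+1 := by push_cast; ring
  rw [e] at hz
  exact hz

open IntermediateField in
private lemma cheb_odd {m n : ℕ} (hm : 2 ≤ m) (hn : n % 2 = 1) :
    Real.sin ((n:ℝ) * π / m) / Real.sin (π/m) ∈ adjoin ℚ {Real.cos (2*π/m)} := by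
  obtain ⟨r, rfl⟩ : ∃ r, n = 2*r+1 := ⟨n/2, by omega⟩
  have hm0 : (0:ℝ) < (m:ℝ) := by positivity
  have hsθ : Real.sin (π/m) ≠ 0 := by
    have h2 : (2:ℝ) ≤ (m:ℝ) := by exact_mod_cast hm
    refine (Real.sin_pos_of_pos_of_lt_pi (by positivity) ?_).ne'
    rw [div_lt_iff₀ hm0]; nlinarith [Real.pi_pos]
  set θ := π / (m:ℝ) with hθdef
  have key : Real.sin ((2*r+1 : ℕ) * θ)
      = Real.sin θ + ∑ i ∈ Finset.range r, 2 * Real.cos (((i:ℝ)+1) * (2*θ)) * Real.sin θ := by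
    have tele := Finset.sum_range_sub (fun i => Real.sin ((2*(i:ℝ)+1)*θ)) r
    have term : ∀ i : ℕ, Real.sin ((2*((i:ℝ)+1)+1)*θ) - Real.sin ((2*(i:ℝ)+1)*θ)
        = 2 * Real.cos (((i:ℝ)+1) * (2*θ)) * Real.sin θ := by
      intro i
      have e1 : (2*((i:ℝ)+1)+1)*θ = ((i:ℝ)+1)*(2*θ) + θ := by ring
      have e2 : (2*(i:ℝ)+1)*θ = ((i:ℝ)+1)*(2*θ) - θ := by ring
      rw [e1, e2, Real.sin_add, Real.sin_sub]
      ring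
    have : Real.sin ((2*r+1 : ℕ) * θ) - Real.sin θ
        = ∑ i ∈ Finset.range r, 2 * Real.cos (((i:ℝ)+1) * (2*θ)) * Real.sin θ := by
      calc Real.sin ((2*r+1 : ℕ) * θ) - Real.sin θ
          = Real.sin ((2*(r:ℝ)+1)*θ) - Real.sin ((2*(0:ℝ)+1)*θ) := by
            push_cast; norm_num
        _ = ∑ i ∈ Finset.range r, (Real.sin ((2*((i:ℝ)+1)+1)*θ) - Real.sin ((2*(i:ℝ)+1)*θ)) := by
            push_cast at tele; linarith [tele]
        _ = ∑ i ∈ Finset.range r, 2 * Real.cos (((i:ℝ)+1) * (2*θ)) * Real.sin θ :=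
            Finset.sum_congr rfl fun i _ => term i
    linarith
  have hdiv : Real.sin ((2*r+1 : ℕ) * π / m) / Real.sin θ
      = 1 + ∑ i ∈ Finset.range r, 2 * Real.cos (((i:ℝ)+1) * (2*θ)) := by
    rw [div_eq_iff hsθ]
    rw [mul_div_assoc, ← hθdef, key, add_mul, one_mul, Finset.sum_mul]
  rw [hdiv]
  have h2θ : (2:ℝ)*θ = 2*π/m := by rw [hθdef]; ring
  apply add_mem (one_mem _)
  apply sum_mem
  intro i _
  have h2mem : (2:ℝ) ∈ adjoin ℚ {Real.cos (2*π/m)} := by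
    have := _root_.natCast_mem (adjoin ℚ {Real.cos (2*π/m)}) 2
    simpa using this
  apply mul_mem h2mem
  have hz := cos_zsmul_mem (F := adjoin ℚ {Real.cos (2*π/m)})
    (mem_adjoin_simple_self ℚ (Real.cos (2*π/m))) ((i:ℤ)+1)
  have e : (((i:ℤ)+1 : ℤ) : ℝ) = (i:ℝ)+1 := by push_cast; ring
  rw [e] at hz
  rw [h2θ]
  exact hz



/-- Lemma 5.3: for `0 < n < m`, the field generated by the quantum integer
`[n]_m = sin(nπ/m)/sin(π/m)` is `ℚ` if `n = 1` or `n = m-1`; is `ℚ(cos(π/m))` if `n`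
is even with `1 < n < m-1`; and is `ℚ(cos(2π/m))` otherwise. -/
theorem stmt13 (n m : ℕ) (h0 : 0 < n) (hnm : n < m) :
    ((n = 1 ∨ n = m - 1) →
      ℚ⟮Real.sin ((n : ℝ) * Real.pi / m) / Real.sin (Real.pi / m)⟯ = ⊥) ∧
    ((n % 2 = 0 ∧ 1 < n ∧ n < m - 1) →
      ℚ⟮Real.sin ((n : ℝ) * Real.pi / m) / Real.sin (Real.pi / m)⟯ =
        ℚ⟮Real.cos (Real.pi / m)⟯) ∧
    ((¬(n = 1 ∨ n = m - 1) ∧ ¬(n % 2 = 0 ∧ 1 < n ∧ n < m - 1)) →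
      ℚ⟮Real.sin ((n : ℝ) * Real.pi / m) / Real.sin (Real.pi / m)⟯ =
        ℚ⟮Real.cos ((2 : ℝ) * Real.pi / m)⟯) := by
  have hm2 : 2 ≤ m := by omega
  have hm0 : (0:ℝ) < (m:ℝ) := by positivity
  have hsθ : Real.sin (π/m) ≠ 0 := by
    have h2 : (2:ℝ) ≤ (m:ℝ) := by exact_mod_cast hm2
    refine (Real.sin_pos_of_pos_of_lt_pi (by positivity) ?_).ne'
    rw [div_lt_iff₀ hm0]; nlinarith [Real.pi_pos]
  refine ⟨?_, ?_, ?_⟩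
  · rintro (rfl | rfl)
    · have e : ((1:ℕ):ℝ) * π / m = π/m := by norm_num
      rw [e, div_self hsθ]
      exact IntermediateField.adjoin_simple_eq_bot_iff.mpr (one_mem ⊥)
    · have hc : ((m-1:ℕ):ℝ) = (m:ℝ)-1 := by push_cast [(by omega : 1 ≤ m)]; ring
      have e : ((m-1:ℕ):ℝ) * π / m = π - π/m := by
        rw [hc]; field_simp
      rw [e, Real.sin_pi_sub, div_self hsθ]
      exact IntermediateField.adjoin_simple_eq_bot_iff.mpr (one_mem ⊥)
  · rintro ⟨he, hn1, hn2⟩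
    have hcr : ((Real.cos (π/(m:ℝ)) : ℝ) : ℂ)
        = (Complex.exp (2*(π:ℝ)*Complex.I/((2*m : ℕ):ℂ))^1
          + (Complex.exp (2*(π:ℝ)*Complex.I/((2*m : ℕ):ℂ))^1)⁻¹)/2 := by
      have := cos_exp m 1 (by omega)
      rw [show ((1:ℕ):ℝ)*(π/(m:ℝ)) = π/m by norm_num] at this
      exact this
    refine engine (t := 1) hn1 hn2 one_pos _ hcr (cheb_even hm2 he) ?_
    intro k hk
    rcases hk with (rfl | rfl) | ⟨h1, _⟩
    · left; rfl
    · right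
      have e : (2*m-1)*1+1 = 2*m := by omega
      rw [e, Nat.mod_self]
    · omega
  · rintro ⟨hne, hnotev⟩
    push_neg at hne
    obtain ⟨hne1, hne2⟩ := hne
    have hn1 : 1 < n := by omega
    have hn2 : n < m - 1 := by omega
    have hodd : n % 2 = 1 := by
      rcases Nat.even_or_odd n with h | h
      · exact absurd ⟨Nat.even_iff.mp h, hn1, hn2⟩ hnotev
      · exact Nat.odd_iff.mp h
    have hcr : ((Real.cos ((2:ℝ)*π/(m:ℝ)) : ℝ) : ℂ)
        = (Complex.exp (2*(π:ℝ)*Complex.I/((2*m : ℕ):ℂ))^2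
          + (Complex.exp (2*(π:ℝ)*Complex.I/((2*m : ℕ):ℂ))^2)⁻¹)/2 := by
      have := cos_exp m 2 (by omega)
      rw [show ((2:ℕ):ℝ)*(π/(m:ℝ)) = 2*π/m by push_cast; ring] at this
      exact this
    refine engine (t := 2) hn1 hn2 two_pos _ hcr (cheb_odd hm2 hodd) ?_
    intro k hk
    have hm4 : 4 ≤ m := by omega
    rcases hk with (rfl | rfl) | ⟨_, (rfl | rfl)⟩
    · left; rfl
    · right
      have e : (2*m-1)*2+2 = 2*(2*m) := by omega
      rw [e, Nat.mul_mod_left]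
    · right
      have e : (m-1)*2+2 = 2*m := by omega
      rw [e, Nat.mod_self]
    · left
      have e : (m+1)*2 = 2*m + 2 := by omega
      rw [e, Nat.add_mod_left]
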